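/- For every nonnegative integer n, define S_m = ∑_{a+b=m} C_{2a} · B_{2b} (sum over pairs of nonnegative integers (a, b) with a + b = m). Then S_0 = 1 and ∑_{i+j=n} S_i · S_j = 16^n (sum over pairs of nonnegative integers (i, j) with i + j = n). -/

import Mathlib

/-- `S m = ∑_{a+b=m} C_{2a} B_{2b}`. -/
def S (m : ℕ) : ℕ :=
  ∑ ab ∈ Finset.HasAntidiagonal.antidiagonal m, catalan (2 * ab.1) * Nat.centralBinom (2 * ab.2)

open PowerSeries Finset
noncomputable def Bq : PowerSeries ℚ := PowerSeries.mk fun n => (Nat.centralBinom n : ℚ)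
noncomputable def Cq : PowerSeries ℚ := PowerSeries.mk fun n => (catalan n : ℚ)

lemma C4 : (C (R := ℚ)) 4 = 4 := map_ofNat _ 4
lemma C2 : (C (R := ℚ)) 2 = 2 := map_ofNat _ 2

lemma coeff_ofNat_mul (a : ℚ⟦X⟧) (n : ℕ) : (coeff (R := ℚ) n) (4 * a) = 4 * coeff (R := ℚ) n a := by
  have : (4 : ℚ⟦X⟧) = C (R := ℚ) 4 := (map_ofNat (C (R := ℚ)) _).symm
  rw [this, coeff_C_mul]

lemma deriv_Bq : (1 - 4 * X) * (d⁄dX ℚ Bq) = 2 * Bq := by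
  ext n
  rw [sub_mul, one_mul, map_sub]
  rcases n with _ | n
  · rw [mul_assoc, coeff_ofNat_mul, coeff_zero_X_mul, coeff_derivative]
    simp [Bq, Nat.centralBinom]
    rw [show (2:ℚ⟦X⟧) = C (R := ℚ) 2 from (map_ofNat (C (R := ℚ)) _).symm]
    simp
  · have h' : ((n+2:ℕ) : ℚ) * (Nat.centralBinom (n+2) : ℚ)
        = 2*(2*(n+1)+1) * Nat.centralBinom (n+1) := by
      exact_mod_cast Nat.succ_mul_centralBinom_succ (n+1)
    rw [mul_assoc, coeff_ofNat_mul, coeff_succ_X_mul, coeff_derivative, coeff_derivative]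
    have h2 : (2 : ℚ⟦X⟧) = C (R := ℚ) 2 := (map_ofNat (C (R := ℚ)) _).symm
    rw [h2, coeff_C_mul]
    simp only [Bq, coeff_mk]
    push_cast at h' ⊢
    ring_nf
    ring_nf at h'
    linarith

lemma sq_Bq : (1 - 4 * X) * Bq ^ 2 = 1 := by
  apply derivative.ext
  · rw [Derivation.leibniz, Derivation.leibniz_pow]
    have h1 : d⁄dX ℚ (1 - 4 * X : ℚ⟦X⟧) = -4 := by
      rw [show (4 : ℚ⟦X⟧) * X = C (R := ℚ) 4 * X from by rw [C4]]
      simp [Derivation.leibniz, C4, ← C4, derivative_C]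
    rw [h1, Derivation.map_one_eq_zero]
    simp only [smul_eq_mul, pow_one, nsmul_eq_mul, Nat.cast_ofNat]
    linear_combination (2 * Bq) * deriv_Bq
  · simp [Bq]

lemma segner : Cq = 1 + X * Cq ^ 2 := by
  ext n
  rcases n with _ | n
  · simp [Cq]
  · rw [map_add, coeff_succ_X_mul, sq, coeff_mul]
    simp only [Cq, coeff_mk, coeff_one, Nat.succ_ne_zero, if_false, zero_add]
    rw [catalan_succ' n]
    push_cast
    ring

lemma sq_two_X_Cq : (2 * X * Cq - 1) ^ 2 = 1 - 4 * X := by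
  linear_combination (-(4*X)) * segner

lemma Bq_mul : Bq * (2 * X * Cq - 1) = -1 := by
  have hsq : (Bq * (2 * X * Cq - 1)) ^ 2 = 1 := by
    rw [mul_pow, sq_two_X_Cq]
    linear_combination sq_Bq
  have hfac : (Bq * (2 * X * Cq - 1) - 1) * (Bq * (2 * X * Cq - 1) + 1) = 0 := by
    linear_combination hsq
  rcases mul_eq_zero.mp hfac with h | h
  · exfalso
    have := congrArg (constantCoeff (R := ℚ)) h
    simp [Bq] at this
    norm_num at this
  · linear_combination h

noncomputable def Bb : PowerSeries ℚ := rescale (-1) Bq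
noncomputable def Cb : PowerSeries ℚ := rescale (-1) Cq

lemma rescale_four_X : rescale (-1 : ℚ) (4 * X) = -(4 * X) := by
  rw [map_mul, rescale_neg_one_X, map_ofNat]
  ring

lemma sq_Bb : (1 + 4 * X) * Bb ^ 2 = 1 := by
  have := congrArg (rescale (-1 : ℚ)) sq_Bq
  rw [map_mul, map_pow, map_sub, map_one, rescale_four_X] at this
  rw [Bb]
  linear_combination this

lemma Bb_mul : Bb * (2 * X * Cb + 1) = 1 := by
  have := congrArg (rescale (-1 : ℚ)) Bq_mul
  rw [map_mul, map_sub, map_one, map_neg, map_one, mul_assoc, map_mul, map_mul,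
      rescale_neg_one_X, map_ofNat] at this
  rw [Bb, Cb]
  linear_combination -this

noncomputable def Gq : PowerSeries ℚ := PowerSeries.mk fun n => (4 : ℚ) ^ n

lemma Gq_inv : (1 - 4 * X) * Gq = 1 := by
  ext n
  rw [sub_mul, one_mul, map_sub, mul_assoc, coeff_ofNat_mul]
  rcases n with _ | n
  · simp [Gq]
  · rw [coeff_succ_X_mul]
    simp [Gq, pow_succ]
    ring

lemma one_sub_four_X_ne : (1 - 4 * X : ℚ⟦X⟧) ≠ 0 := by
  intro h
  have := congrArg (constantCoeff (R := ℚ)) h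
  simp [← C4] at this

lemma Bq_sq : Bq ^ 2 = Gq := by
  apply mul_left_cancel₀ one_sub_four_X_ne
  rw [sq_Bq, Gq_inv]

lemma T_range (n : ℕ) :
    ∑ k ∈ Finset.range (n+1), (Nat.centralBinom k : ℚ) * (Nat.centralBinom (n-k) : ℚ) = 4 ^ n := by
  have := congrArg (coeff (R := ℚ) n) Bq_sq
  rw [sq, coeff_mul, Finset.Nat.sum_antidiagonal_eq_sum_range_succ_mk] at this
  simpa [Bq, Gq] using this

noncomputable def Kq : PowerSeries ℚ :=
  PowerSeries.mk fun n => if Even n then (4:ℚ) ^ (n/2) * (Nat.centralBinom (n/2) : ℚ) else 0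

lemma Kq_even (a : ℕ) : coeff (R := ℚ) (2*a) Kq = 4 ^ a * (Nat.centralBinom a : ℚ) := by
  simp [Kq, Nat.mul_div_cancel_left a (by norm_num : 0 < 2)]

lemma Kq_odd (k : ℕ) (h : ¬ Even k) : coeff (R := ℚ) k Kq = 0 := by
  simp [Kq, h]

lemma even_sum (f : ℕ → ℚ) (h : ∀ k, ¬ Even k → f k = 0) (m : ℕ) :
    ∑ k ∈ Finset.range (2*m+1), f k = ∑ a ∈ Finset.range (m+1), f (2*a) := by
  induction m with
  | zero => simp
  | succ m ih =>
    have e1 : 2*(m+1)+1 = (2*m+1)+1+1 := by ring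
    rw [e1, Finset.sum_range_succ, Finset.sum_range_succ, ih,
        Finset.sum_range_succ, h (2*m+1) (by simp [parity_simps])]
    have e2 : 2*m+1+1 = 2*(m+1) := by ring
    rw [e2, Finset.sum_range_succ (fun a => f (2*a)) (m+1), Finset.sum_range_succ (fun a => f (2*a)) m]
    ring

lemma coeff_Kq_sq (n : ℕ) :
    coeff (R := ℚ) n (Kq ^ 2) = if Even n then (16:ℚ) ^ (n/2) else 0 := by
  rw [sq, coeff_mul, Finset.Nat.sum_antidiagonal_eq_sum_range_succ_mk]
  by_cases hn : Even n
  · obtain ⟨m, rfl⟩ := hn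
    have e0 : m + m = 2*m := by ring
    rw [if_pos (by exact ⟨m, rfl⟩), e0]
    rw [even_sum _ (fun k hk => by rw [Kq_odd k hk, zero_mul]) m]
    have : ∀ a ∈ Finset.range (m+1),
        coeff (R := ℚ) (2*a) Kq * coeff (R := ℚ) (2*m - 2*a) Kq
        = 16 ^ m * ((Nat.centralBinom a : ℚ) * (Nat.centralBinom (m-a) : ℚ) / 4 ^ m) := by
      intro a ha
      have ham : a ≤ m := Nat.lt_succ_iff.mp (Finset.mem_range.mp ha)
      have e3 : 2*m - 2*a = 2*(m-a) := by omega
      rw [e3, Kq_even, Kq_even]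
      have h4 : (4:ℚ) ^ a * 4 ^ (m - a) = 4 ^ m := by
        rw [← pow_add]; congr 1; omega
      field_simp
      rw [show (16:ℚ)^m = 4^m * 4^m from by rw [← pow_add, ← two_mul]; norm_num [pow_mul]]
      rw [← h4]; ring
    rw [Finset.sum_congr rfl this, ← Finset.mul_sum, ← Finset.sum_div, T_range m]
    rw [Nat.mul_div_cancel_left m (by norm_num : 0 < 2)]
    field_simp
  · rw [if_neg hn]
    apply Finset.sum_eq_zero
    intro k hk
    simp only
    by_cases h2 : Even k
    · have hle : k ≤ n := Nat.lt_succ_iff.mp (Finset.mem_range.mp hk)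
      have : ¬ Even (n - k) := by
        intro hnk
        apply hn
        have : n = k + (n - k) := by omega
        rw [this]
        exact Even.add h2 hnk
      rw [Kq_odd _ this, mul_zero]
    · rw [Kq_odd _ h2, zero_mul]

lemma C16 : (C (R := ℚ)) 16 = 16 := map_ofNat _ 16
lemma coeff_sixteen_mul (a : ℚ⟦X⟧) (n : ℕ) : (coeff (R := ℚ) n) (16 * a) = 16 * coeff (R := ℚ) n a := by
  rw [show (16 : ℚ⟦X⟧) = C (R := ℚ) 16 from C16.symm, coeff_C_mul]
lemma coeff_two_mul (a : ℚ⟦X⟧) (n : ℕ) : (coeff (R := ℚ) n) (2 * a) = 2 * coeff (R := ℚ) n a := by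
  rw [show (2 : ℚ⟦X⟧) = C (R := ℚ) 2 from C2.symm, coeff_C_mul]

lemma Kq_sq_eq : (1 - 16 * X^2) * Kq ^ 2 = 1 := by
  ext n
  rw [sub_mul, one_mul, map_sub, mul_assoc, coeff_sixteen_mul, coeff_X_pow_mul']
  rcases n with _ | n
  · rw [if_neg (by omega : ¬ 2 ≤ 0), coeff_Kq_sq]
    simp
  · rcases n with _ | n
    · rw [if_neg (by omega : ¬ 2 ≤ 1), coeff_Kq_sq]
      simp [Nat.even_iff]
    · have hle : 2 ≤ n + 1 + 1 := by omega
      rw [if_pos hle, coeff_Kq_sq, coeff_Kq_sq]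
      have e1 : n + 1 + 1 - 2 = n := by omega
      rw [e1]
      have hpar : Even (n+1+1) ↔ Even n := by simp [parity_simps]
      by_cases hn : Even n
      · rw [if_pos (hpar.mpr hn), if_pos hn]
        have : (n+1+1)/2 = n/2 + 1 := by omega
        rw [this, pow_succ]
        simp [coeff_one]
        ring
      · rw [if_neg (fun h => hn (hpar.mp h)), if_neg hn]
        simp [coeff_one]

lemma one_sub_sixteen_ne : (1 - 16 * X^2 : ℚ⟦X⟧) ≠ 0 := by
  intro h
  have := congrArg (constantCoeff (R := ℚ)) h
  simp [← C16] at this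

lemma Bb_const : constantCoeff (R := ℚ) Bb = 1 := by
  have : coeff (R := ℚ) 0 Bb = 1 := by
    rw [Bb, coeff_rescale]
    simp [Bq, Nat.centralBinom]
  simpa using this

lemma Kq_eq : Kq = Bq * Bb := by
  have h1 : (1 - 16 * X^2) * (Bq * Bb)^2 = 1 := by
    linear_combination ((1 + 4*X) * Bb^2) * sq_Bq + sq_Bb
  have hsq : Kq^2 = (Bq * Bb)^2 := mul_left_cancel₀ one_sub_sixteen_ne (Kq_sq_eq.trans h1.symm)
  have hfac : (Kq - Bq * Bb) * (Kq + Bq * Bb) = 0 := by linear_combination hsq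
  rcases mul_eq_zero.mp hfac with h | h
  · linear_combination h
  · exfalso
    have := congrArg (constantCoeff (R := ℚ)) h
    rw [map_add, map_mul, Bb_const] at this
    have hK : constantCoeff (R := ℚ) Kq = 1 := by
      have : coeff (R := ℚ) 0 Kq = 1 := by simp [Kq, Nat.centralBinom]
      simpa using this
    rw [hK] at this
    simp [Bq, Nat.centralBinom] at this

lemma P_lemma (n : ℕ) :
    2 * ∑ k ∈ Finset.range (n+1), (catalan k : ℚ) * (Nat.centralBinom (n-k) : ℚ)
      = (Nat.centralBinom (n+1) : ℚ) := by
  have e : 2 * (X * (Cq * Bq)) = Bq - 1 := by linear_combination Bq_mul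
  have := congrArg (coeff (R := ℚ) (n+1)) e
  rw [coeff_two_mul, coeff_succ_X_mul, coeff_mul,
      Finset.Nat.sum_antidiagonal_eq_sum_range_succ_mk, map_sub] at this
  simpa [Bq, Cq, coeff_one] using this

lemma coeff_Cb (k : ℕ) : coeff (R := ℚ) k Cb = (-1)^k * (catalan k : ℚ) := by
  rw [Cb, coeff_rescale]
  simp [Cq]

lemma D_series : Bq + 2 * (X * (Cb * Bq)) = (1 + 4*X) * Kq := by
  have key : Bb * (Bq + 2 * (X * (Cb * Bq))) = Bb * ((1 + 4*X) * Kq) := by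
    rw [Kq_eq]
    linear_combination Bq * Bb_mul - Bq * sq_Bb
  have hBb : Bb ≠ 0 := by
    intro h
    have := congrArg (constantCoeff (R := ℚ)) h
    rw [Bb_const] at this
    simp at this
  exact mul_left_cancel₀ hBb key

lemma D_lemma (m : ℕ) :
    (Nat.centralBinom (2*m+1) : ℚ)
      + 2 * ∑ k ∈ Finset.range (2*m+1), (-1)^k * (catalan k : ℚ) * (Nat.centralBinom (2*m-k) : ℚ)
      = 4 * 4^m * (Nat.centralBinom m : ℚ) := by
  have := congrArg (coeff (R := ℚ) (2*m+1)) D_series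
  rw [map_add, coeff_two_mul, coeff_succ_X_mul, coeff_mul,
      Finset.Nat.sum_antidiagonal_eq_sum_range_succ_mk, add_mul, one_mul, map_add,
      mul_assoc, coeff_ofNat_mul, coeff_succ_X_mul, Kq_even] at this
  rw [Kq_odd (2*m+1) (by simp [parity_simps]), zero_add] at this
  simp only [coeff_Cb] at this
  simpa [Bq, mul_assoc] using this

lemma E_lemma (m : ℕ) :
    ∑ a ∈ Finset.range (m+1), (catalan (2*a) : ℚ) * (Nat.centralBinom (2*(m-a)) : ℚ)
      = 4^m * (Nat.centralBinom m : ℚ) := by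
  have hP := P_lemma (2*m)
  have hD := D_lemma m
  have hsum : ∑ k ∈ Finset.range (2*m+1),
      ((1 + (-1)^k) * (catalan k : ℚ) * (Nat.centralBinom (2*m-k) : ℚ))
      = ∑ a ∈ Finset.range (m+1),
        ((1 + (-1)^(2*a)) * (catalan (2*a) : ℚ) * (Nat.centralBinom (2*m-2*a) : ℚ)) := by
    apply _root_.even_sum
    intro k hk
    rw [Nat.not_even_iff_odd] at hk
    rw [hk.neg_one_pow]
    ring
  have hsum2 : ∀ a ∈ Finset.range (m+1),
      ((1 + (-1)^(2*a)) * (catalan (2*a) : ℚ) * (Nat.centralBinom (2*m-2*a) : ℚ))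
      = 2 * ((catalan (2*a) : ℚ) * (Nat.centralBinom (2*(m-a)) : ℚ)) := by
    intro a ha
    have : 2*m - 2*a = 2*(m-a) := by omega
    rw [this, pow_mul]
    norm_num
    ring
  rw [Finset.sum_congr rfl hsum2] at hsum
  rw [← Finset.mul_sum] at hsum
  -- hP : 2 * ∑ C_k B_{2m-k} = B_{2m+1}
  -- hD : B_{2m+1} + 2 * ∑ (-1)^k C_k B_{2m-k} = 4*4^m*B_m
  -- hsum : ∑ (1+(-1)^k) C_k B_{2m-k} = 2 * E
  have expand : ∑ k ∈ Finset.range (2*m+1),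
      ((1 + (-1)^k) * (catalan k : ℚ) * (Nat.centralBinom (2*m-k) : ℚ))
      = ∑ k ∈ Finset.range (2*m+1), (catalan k : ℚ) * (Nat.centralBinom (2*m-k) : ℚ)
        + ∑ k ∈ Finset.range (2*m+1), (-1)^k * (catalan k : ℚ) * (Nat.centralBinom (2*m-k) : ℚ) := by
    rw [← Finset.sum_add_distrib]
    apply Finset.sum_congr rfl
    intro k hk
    ring
  rw [expand] at hsum
  linarith

lemma S_eq (m : ℕ) : S m = 4^m * Nat.centralBinom m := by
  have h := E_lemma m
  have : ((S m : ℚ)) = ((4^m * Nat.centralBinom m : ℕ) : ℚ) := by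
    rw [S]
    push_cast
    rw [Finset.Nat.sum_antidiagonal_eq_sum_range_succ_mk]
    simpa using h
  exact_mod_cast this

lemma T_nat (n : ℕ) :
    ∑ ij ∈ Finset.HasAntidiagonal.antidiagonal n, Nat.centralBinom ij.1 * Nat.centralBinom ij.2 = 4^n := by
  have h := T_range n
  have : ((∑ ij ∈ Finset.HasAntidiagonal.antidiagonal n, Nat.centralBinom ij.1 * Nat.centralBinom ij.2 : ℕ) : ℚ)
      = ((4^n : ℕ) : ℚ) := by
    push_cast
    rw [Finset.Nat.sum_antidiagonal_eq_sum_range_succ_mk]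
    simpa using h
  exact_mod_cast this

/-- With `S_m = ∑_{a+b=m} C_{2a} B_{2b}`, we have `S_0 = 1` and `∑_{i+j=n} S_i S_j = 16^n`
for every nonnegative integer `n`. -/
theorem S_convolution (n : ℕ) :
    S 0 = 1 ∧ ∑ ij ∈ Finset.HasAntidiagonal.antidiagonal n, S ij.1 * S ij.2 = 16 ^ n := by
  constructor
  · simp [S, Nat.centralBinom]
  · have hc : ∀ ij ∈ Finset.HasAntidiagonal.antidiagonal n,
        S ij.1 * S ij.2 = 4^n * (Nat.centralBinom ij.1 * Nat.centralBinom ij.2) := by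
      intro ij hij
      have hn : ij.1 + ij.2 = n := Finset.HasAntidiagonal.mem_antidiagonal.mp hij
      rw [S_eq, S_eq, ← hn, pow_add]
      ring
    rw [Finset.sum_congr rfl hc, ← Finset.mul_sum, T_nat, ← pow_add, two_mul n |>.symm, pow_mul]
    norm_num
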